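/- For an invertible d×d matrix D and arbitrary d×d matrix E, with U(τ) = cosh(Dτ) - D⁻¹ sinh(Dτ) E and V(τ) = -sinh(Dτ) D + cosh(Dτ) E, one has the integral identity ∫₀^τ U(s) ds = D⁻²(E - V(τ)). -/

import Mathlib

open Matrix

/-- Matrix hyperbolic cosine, defined by its power series `∑ A^(2k)/(2k)!`. -/
noncomputable def mcosh {d : ℕ} (A : Matrix (Fin d) (Fin d) ℝ) : Matrix (Fin d) (Fin d) ℝ :=
  ∑' k : ℕ, (((2 * k).factorial : ℝ))⁻¹ • A ^ (2 * k)

/-- Matrix hyperbolic sine, defined by its power series `∑ A^(2k+1)/(2k+1)!`. -/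
noncomputable def msinh {d : ℕ} (A : Matrix (Fin d) (Fin d) ℝ) : Matrix (Fin d) (Fin d) ℝ :=
  ∑' k : ℕ, (((2 * k + 1).factorial : ℝ))⁻¹ • A ^ (2 * k + 1)

set_option maxHeartbeats 1000000
open NormedSpace

section
variable {d : ℕ}
attribute [local instance] Matrix.linftyOpNormedRing Matrix.linftyOpNormedAlgebra

lemma exp_eq_add (A : Matrix (Fin d) (Fin d) ℝ) :
    exp A = mcosh A + msinh A := by
  have hs := expSeries_summable' (𝕂 := ℝ) A
  have he : Summable fun k : ℕ => (((2 * k).factorial : ℝ))⁻¹ • A ^ (2 * k) :=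
    hs.comp_injective (i := fun k => 2 * k) (fun a b h => by simpa using h)
  have ho : Summable fun k : ℕ => (((2 * k + 1).factorial : ℝ))⁻¹ • A ^ (2 * k + 1) :=
    hs.comp_injective (i := fun k => 2 * k + 1) (fun a b h => by simpa using h)
  rw [exp_eq_tsum (𝕂 := ℝ), mcosh, msinh]
  exact (tsum_even_add_odd he ho).symm

lemma exp_neg_eq (A : Matrix (Fin d) (Fin d) ℝ) :
    exp (-A) = mcosh A - msinh A := by
  have hs := expSeries_summable' (𝕂 := ℝ) (-A)
  have he : Summable fun k : ℕ => (((2 * k).factorial : ℝ))⁻¹ • (-A) ^ (2 * k) :=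
    hs.comp_injective (i := fun k => 2 * k) (fun a b h => by simpa using h)
  have ho : Summable fun k : ℕ => (((2 * k + 1).factorial : ℝ))⁻¹ • (-A) ^ (2 * k + 1) :=
    hs.comp_injective (i := fun k => 2 * k + 1) (fun a b h => by simpa using h)
  have h := tsum_even_add_odd (f := fun n : ℕ => ((n.factorial : ℝ))⁻¹ • (-A) ^ n) he ho
  have e1 : (∑' k : ℕ, (((2 * k).factorial : ℝ))⁻¹ • (-A) ^ (2 * k)) = mcosh A :=
    tsum_congr fun k => by rw [Even.neg_pow ⟨k, by ring⟩]
  have e2 : (∑' k : ℕ, (((2 * k + 1).factorial : ℝ))⁻¹ • (-A) ^ (2 * k + 1)) = -msinh A := by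
    rw [msinh, ← tsum_neg]
    exact tsum_congr fun k => by rw [Odd.neg_pow ⟨k, rfl⟩, smul_neg]
  beta_reduce at h
  rw [exp_eq_tsum (𝕂 := ℝ)]
  beta_reduce
  rw [← h, e1, e2, ← sub_eq_add_neg]

lemma mcosh_eq (A : Matrix (Fin d) (Fin d) ℝ) :
    mcosh A = (2⁻¹ : ℝ) • (exp A + exp (-A)) := by
  rw [exp_eq_add, exp_neg_eq]; module

lemma msinh_eq (A : Matrix (Fin d) (Fin d) ℝ) :
    msinh A = (2⁻¹ : ℝ) • (exp A - exp (-A)) := by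
  rw [exp_eq_add, exp_neg_eq]; module

lemma hasDerivAt_mcosh (D : Matrix (Fin d) (Fin d) ℝ) (τ : ℝ) :
    HasDerivAt (fun t => mcosh (t • D)) (msinh (τ • D) * D) τ := by
  have h1 := hasDerivAt_exp_smul_const (𝕂 := ℝ) D τ
  have h2 := hasDerivAt_exp_smul_const (𝕂 := ℝ) (-D) τ
  have h := (h1.add h2).const_smul (2⁻¹ : ℝ)
  have key : ∀ t : ℝ, mcosh (t • D) = (2⁻¹ : ℝ) • (exp (t • D) + exp (t • -D)) := by
    intro t; rw [mcosh_eq, smul_neg]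
  replace h := h.congr_of_eventuallyEq (Filter.Eventually.of_forall fun t => key t)
  refine h.congr_deriv ?_
  symm
  rw [msinh_eq, smul_neg, smul_mul_assoc, sub_mul]
  simp only [mul_neg, neg_neg, sub_eq_add_neg]
  rfl

lemma hasDerivAt_msinh (D : Matrix (Fin d) (Fin d) ℝ) (τ : ℝ) :
    HasDerivAt (fun t => msinh (t • D)) (mcosh (τ • D) * D) τ := by
  have h1 := hasDerivAt_exp_smul_const (𝕂 := ℝ) D τ
  have h2 := hasDerivAt_exp_smul_const (𝕂 := ℝ) (-D) τ
  have h := (h1.sub h2).const_smul (2⁻¹ : ℝ)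
  have key : ∀ t : ℝ, msinh (t • D) = (2⁻¹ : ℝ) • (exp (t • D) - exp (t • -D)) := by
    intro t; rw [msinh_eq, smul_neg]
  replace h := h.congr_of_eventuallyEq (Filter.Eventually.of_forall fun t => key t)
  refine h.congr_deriv ?_
  symm
  rw [mcosh_eq, smul_neg, smul_mul_assoc, add_mul]
  simp only [mul_neg, neg_neg, sub_eq_add_neg]
  rfl

end

section
variable {d : ℕ}
attribute [local instance] Matrix.linftyOpNormedRing Matrix.linftyOpNormedAlgebra

lemma commute_D_mcosh (D : Matrix (Fin d) (Fin d) ℝ) (t : ℝ) :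
    Commute D (mcosh (t • D)) := by
  rw [mcosh_eq]
  exact ((((Commute.refl D).smul_right t).exp_right).add_right
    ((((Commute.refl D).smul_right t).neg_right).exp_right)).smul_right _

lemma commute_D_msinh (D : Matrix (Fin d) (Fin d) ℝ) (t : ℝ) :
    Commute D (msinh (t • D)) := by
  rw [msinh_eq]
  exact ((((Commute.refl D).smul_right t).exp_right).sub_right
    ((((Commute.refl D).smul_right t).neg_right).exp_right)).smul_right _

lemma hasDerivAt_G (D E : Matrix (Fin d) (Fin d) ℝ) (hD : IsUnit D.det) (τ : ℝ) :
    HasDerivAt (fun t => (D ^ 2)⁻¹ * (E - (-(msinh (t • D) * D) + mcosh (t • D) * E)))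
      (mcosh (τ • D) - D⁻¹ * msinh (τ • D) * E) τ := by
  have h1 := (hasDerivAt_msinh D τ).mul_const D
  have h2 := (hasDerivAt_mcosh D τ).mul_const E
  have h := ((h1.neg.add h2).const_sub E).const_mul ((D ^ 2)⁻¹)
  refine h.congr_deriv ?_
  have ha : (D ^ 2)⁻¹ * (mcosh (τ • D) * D * D) = mcosh (τ • D) := by
    have hc : mcosh (τ • D) * D * D = D ^ 2 * mcosh (τ • D) := by
      rw [mul_assoc, ← pow_two, ((commute_D_mcosh D τ).pow_left 2).eq]
    rw [hc, ← mul_assoc, Matrix.nonsing_inv_mul _ (by rw [det_pow]; exact hD.pow 2), one_mul]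
  have hb : (D ^ 2)⁻¹ * (msinh (τ • D) * D * E) = D⁻¹ * msinh (τ • D) * E := by
    have hc : msinh (τ • D) * D = D * msinh (τ • D) := ((commute_D_msinh D τ).symm).eq
    rw [hc, pow_two, Matrix.mul_inv_rev, mul_assoc, mul_assoc, ← mul_assoc D⁻¹ D _,
      Matrix.nonsing_inv_mul _ hD, one_mul, ← mul_assoc]
  rw [neg_add, neg_neg, mul_add, mul_neg, ha, hb, ← sub_eq_add_neg]

lemma mcosh_zero : mcosh (0 : Matrix (Fin d) (Fin d) ℝ) = 1 := by
  rw [mcosh, tsum_eq_single 0 (fun k hk => by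
    rw [zero_pow (by omega), smul_zero])]
  simp

lemma msinh_zero : msinh (0 : Matrix (Fin d) (Fin d) ℝ) = 0 := by
  rw [msinh]
  convert tsum_zero with k
  rw [zero_pow (by omega), smul_zero]

lemma continuous_U (D E : Matrix (Fin d) (Fin d) ℝ) :
    Continuous fun t : ℝ => mcosh (t • D) - D⁻¹ * msinh (t • D) * E := by
  have hP : Continuous fun t : ℝ => exp (t • D) :=
    Differentiable.continuous fun t => (hasDerivAt_exp_smul_const (𝕂 := ℝ) D t).differentiableAt
  have hN : Continuous fun t : ℝ => exp (t • -D) :=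
    Differentiable.continuous fun t =>
      (hasDerivAt_exp_smul_const (𝕂 := ℝ) (-D) t).differentiableAt
  simp only [mcosh_eq, msinh_eq, ← smul_neg]
  exact ((hP.add hN).const_smul (2⁻¹ : ℝ)).sub
    ((continuous_const.mul ((hP.sub hN).const_smul (2⁻¹ : ℝ))).mul continuous_const)


/-- For invertible `D` and arbitrary `E`, with `U(s) = cosh(Ds) - D⁻¹ sinh(Ds) E` and
`V(τ) = -sinh(Dτ) D + cosh(Dτ) E`, one has `∫₀^τ U(s) ds = D⁻²(E - V(τ))` (entrywise). -/
theorem integral_of_U {d : ℕ} (D E : Matrix (Fin d) (Fin d) ℝ) (hD : IsUnit D.det) (τ : ℝ) :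
    ∀ i j, (∫ s in (0 : ℝ)..τ, (mcosh (s • D) - D⁻¹ * msinh (s • D) * E) i j) =
      ((D ^ 2)⁻¹ * (E - (-(msinh (τ • D) * D) + mcosh (τ • D) * E))) i j := by
  intro i j
  let l : Matrix (Fin d) (Fin d) ℝ →ₗ[ℝ] ℝ :=
    { toFun := fun M => M i j, map_add' := fun _ _ => rfl, map_smul' := fun _ _ => rfl }
  let L := l.toContinuousLinearMap
  have key := intervalIntegral.integral_eq_sub_of_hasDerivAt
    (f := fun t => ((D ^ 2)⁻¹ * (E - (-(msinh (t • D) * D) + mcosh (t • D) * E))) i j)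
    (f' := fun t => (mcosh (t • D) - D⁻¹ * msinh (t • D) * E) i j)
    (a := 0) (b := τ)
    (fun t _ => L.hasFDerivAt.comp_hasDerivAt t (hasDerivAt_G D E hD t))
    ((L.continuous.comp (continuous_U D E)).intervalIntegrable 0 τ)
  rw [key]
  beta_reduce
  rw [zero_smul, msinh_zero, mcosh_zero, zero_mul, one_mul, neg_zero, zero_add,
    sub_self, Matrix.mul_zero, Matrix.zero_apply, sub_zero]
end
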